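/- Let d ≥ 2, let 0 ≤ l_j < h_j for j = 1, …, d−1, let p₁, …, p_n ∈ ℝ^d be pairwise distinct, and define c_i ∈ ℝ^d by c_i[d] = Σ_{j=1}^{d−1} l_j·p_i[j] + p_i[d] and c_i[j] = (p_i[d] + h_j·p_i[j] + Σ_{k=1, k≠j}^{d−1} l_k·p_i[k]) / h_j for j ≤ d−1. If c_i is a skyline point of {c₁, …, c_n} (i.e., there is no j ≠ i with c_j[k] ≤ c_i[k] for all k = 1, …, d), then p_i is an eclipse point of {p₁, …, p_n} with respect to the ranges [l_j, h_j]. (Sound direction of the high-dimensional transformation: skyline points of the mapped dataset correspond to eclipse points.) -/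

import Mathlib

/-- The weighted sum `S(p)_r = sum_{j<d-1} r[j]*p[j] + p[d-1]` of a point
`p` in `R^d` for a ratio vector `r` in `R^(d-1)`, with `d = m + 1`. -/
noncomputable def wsum {m : ℕ} (p : Fin (m + 1) → ℝ) (r : Fin m → ℝ) : ℝ :=
  (∑ j : Fin m, r j * p j.castSucc) + p (Fin.last m)

/-- `p` eclipse-dominates `q` w.r.t. the ranges `[l j, h j]`. -/
def eclipseDom {m : ℕ} (l h : Fin m → ℝ) (p q : Fin (m + 1) → ℝ) : Prop :=
  p ≠ q ∧ ∀ r : Fin m → ℝ, (∀ j, r j ∈ Set.Icc (l j) (h j)) → wsum p r ≤ wsum q r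

/-- The last coordinate `c[d]` of the mapped point of `p`. -/
noncomputable def cLast {m : ℕ} (l : Fin m → ℝ) (p : Fin (m + 1) → ℝ) : ℝ :=
  (∑ k : Fin m, l k * p k.castSucc) + p (Fin.last m)

/-- The `j`-th coordinate (`j < d - 1`) of the mapped point of `p`. -/
noncomputable def cCoord {m : ℕ} (l h : Fin m → ℝ) (p : Fin (m + 1) → ℝ) (j : Fin m) : ℝ :=
  (p (Fin.last m) + h j * p j.castSucc +
    ∑ k ∈ Finset.univ.erase j, l k * p k.castSucc) / h j

/-- Sound direction of the high-dimensional transformation: skyline points of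
the mapped dataset correspond to eclipse points. -/
theorem mapped_skyline_imp_eclipse_point (m n : ℕ) (hm : 1 ≤ m)
    (l h : Fin m → ℝ) (hl : ∀ j, 0 ≤ l j) (hlh : ∀ j, l j < h j)
    (p : Fin n → (Fin (m + 1) → ℝ)) (hinj : Function.Injective p) (i : Fin n)
    (hsky : ¬ ∃ j : Fin n, j ≠ i ∧
      (∀ k : Fin m, cCoord l h (p j) k ≤ cCoord l h (p i) k) ∧
      cLast l (p j) ≤ cLast l (p i)) :
    ¬ ∃ j : Fin n, j ≠ i ∧ eclipseDom l h (p j) (p i) := by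
  rintro ⟨j, hj, _, hdom⟩
  apply hsky
  refine ⟨j, hj, ?_, ?_⟩
  · intro k
    have hk : 0 < h k := lt_of_le_of_lt (hl k) (hlh k)
    set r : Fin m → ℝ := fun t => if t = k then h k else l t with hr
    have hrmem : ∀ t, r t ∈ Set.Icc (l t) (h t) := by
      intro t
      by_cases ht : t = k
      · subst ht; simp [hr, (hlh t).le]
      · simp [hr, ht, (hlh t).le]
    have key := hdom r hrmem
    have hws : ∀ q : Fin (m + 1) → ℝ,
        wsum q r = q (Fin.last m) + h k * q k.castSucc +
          ∑ t ∈ Finset.univ.erase k, l t * q t.castSucc := by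
      intro q
      have hsum : (∑ t : Fin m, r t * q t.castSucc)
          = r k * q k.castSucc + ∑ t ∈ Finset.univ.erase k, r t * q t.castSucc :=
        (Finset.add_sum_erase _ _ (Finset.mem_univ k)).symm
      have herase : ∑ t ∈ Finset.univ.erase k, r t * q t.castSucc
          = ∑ t ∈ Finset.univ.erase k, l t * q t.castSucc := by
        refine Finset.sum_congr rfl fun t ht => ?_
        have : t ≠ k := Finset.ne_of_mem_erase ht
        simp [hr, this]
      rw [wsum, hsum, herase]; simp only [hr, if_pos rfl]
      ring
    unfold cCoord
    refine (div_le_div_iff_of_pos_right hk).mpr ?_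
    rw [← hws, ← hws]; exact key
  · exact hdom l (fun t => ⟨le_rfl, (hlh t).le⟩)
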